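/- Let $0 < p < 1$ and for integer $M \ge 1$ define $g_p(\alpha \mid M) = 2^{1/M} \frac{\alpha^{\alpha}}{(\alpha-1)^{\alpha-1}} p^{\alpha-1}(1-p) - 1$ for $\alpha > 1$. Let $\alpha_{p,M}$ denote the unique root of $g_p(\cdot \mid M)$ in $(\frac{1}{1-p}, \infty)$. Then $\alpha_{p,M} \to \frac{1}{1-p}$ as $M \to \infty$; more precisely, for every $s$ with $0 < s < \frac{1}{2}$ there exists $M_0$ such that for all $M \ge M_0$, $\frac{1}{1-p} < \alpha_{p,M} \le \frac{1}{1-p} + M^{-s}$. -/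

import Mathlib

/-- `g_p(α | M) = 2^{1/M} α^α / (α-1)^(α-1) · p^(α-1) (1-p) - 1`, with real powers. -/
noncomputable def gM (p : ℝ) (M : ℕ) (α : ℝ) : ℝ :=
  (2 : ℝ) ^ ((1 : ℝ) / M) * (α ^ α / (α - 1) ^ (α - 1)) * p ^ (α - 1) * (1 - p) - 1

/-- Logarithm of the main factor of `gM`. -/
noncomputable def Lf (p α : ℝ) : ℝ :=
  α * Real.log α - (α - 1) * Real.log (α - 1) + (α - 1) * Real.log p + Real.log (1 - p)

lemma hasDerivAt_Lf (p : ℝ) {α : ℝ} (hα : 1 < α) :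
    HasDerivAt (Lf p) (Real.log α - Real.log (α - 1) + Real.log p) α := by
  have h0 : (0:ℝ) < α := by linarith
  have h1 : HasDerivAt (fun x : ℝ => x * Real.log x) (Real.log α + 1) α :=
    Real.hasDerivAt_mul_log h0.ne'
  have h2 : HasDerivAt (fun x : ℝ => (x - 1) * Real.log (x - 1)) (Real.log (α - 1) + 1) α := by
    have := (Real.hasDerivAt_mul_log (x := α - 1) (by intro h; linarith [sub_eq_zero.mp h] : α - 1 ≠ 0)).comp α
      ((hasDerivAt_id α).sub_const 1)
    simpa [Function.comp_def] using this
  have h3 : HasDerivAt (fun x : ℝ => (x - 1) * Real.log p) (Real.log p) α := by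
    simpa using ((hasDerivAt_id α).sub_const 1).mul_const (Real.log p)
  have h := ((h1.sub h2).add h3).add_const (Real.log (1 - p))
  exact h.congr_deriv (by ring)

lemma continuousOn_Lf (p : ℝ) {s : Set ℝ} (hs : ∀ x ∈ s, 1 < x) :
    ContinuousOn (Lf p) s := fun x hx =>
  (hasDerivAt_Lf p (hs x hx)).continuousAt.continuousWithinAt

lemma gM_eq (p : ℝ) (hp : 0 < p) (hp1 : p < 1) (M : ℕ) {α : ℝ} (hα : 1 < α) :
    gM p M α = (2:ℝ) ^ ((1:ℝ)/M) * Real.exp (Lf p α) - 1 := by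
  have h0 : (0:ℝ) < α := by linarith
  have h1 : (0:ℝ) < α - 1 := by linarith
  have h1p : (0:ℝ) < 1 - p := by linarith
  rw [gM, Lf]
  rw [Real.rpow_def_of_pos h0, Real.rpow_def_of_pos h1, Real.rpow_def_of_pos hp,
    Real.exp_add, Real.exp_add, Real.exp_sub, Real.exp_log h1p,
    mul_comm (Real.log α) α, mul_comm (Real.log (α-1)) (α-1), mul_comm (Real.log p) (α-1)]
  ring

lemma Lf_root (p : ℝ) (hp : 0 < p) (hp1 : p < 1) : Lf p (1/(1-p)) = 0 := by
  have h1p : (0:ℝ) < 1 - p := by linarith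
  have hα₀ : (0:ℝ) < 1/(1-p) := by positivity
  have hsub : 1/(1-p) - 1 = p * (1/(1-p)) := by field_simp; ring
  rw [Lf, hsub, Real.log_mul hp.ne' hα₀.ne']
  have hlog : Real.log (1/(1-p)) = - Real.log (1 - p) := by
    rw [one_div, Real.log_inv]
  rw [hlog]
  field_simp
  ring

lemma Lf_deriv_bound (p : ℝ) (hp : 0 < p) (hp1 : p < 1) {ξ : ℝ}
    (hξ : 1/(1-p) ≤ ξ) (hξ1 : ξ ≤ 1/(1-p) + 1) :
    Real.log ξ - Real.log (ξ - 1) + Real.log p ≤ -(1-p)^2 * (ξ - 1/(1-p)) := by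
  have h1p : (0:ℝ) < 1 - p := by linarith
  have hα₀1 : (1:ℝ) < 1/(1-p) := by
    rw [lt_div_iff₀ h1p]; linarith
  have hξ1' : (1:ℝ) < ξ := lt_of_lt_of_le hα₀1 hξ
  have hm : (0:ℝ) < ξ - 1 := by linarith
  have hpξ : (0:ℝ) < p * ξ := by positivity
  have key : Real.log ξ - Real.log (ξ - 1) + Real.log p
      = Real.log (p * ξ / (ξ - 1)) := by
    rw [Real.log_div hpξ.ne' hm.ne', Real.log_mul hp.ne' (by linarith : ξ ≠ 0)]
    ring
  rw [key]
  have hb : Real.log (p * ξ / (ξ - 1)) ≤ p * ξ / (ξ - 1) - 1 :=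
    Real.log_le_sub_one_of_pos (by positivity)
  refine hb.trans ?_
  rw [div_sub_one hm.ne', div_le_iff₀ hm]
  have hα₀eq : (1 - p) * (1/(1-p)) = 1 := by field_simp
  nlinarith [mul_nonneg (mul_nonneg h1p.le (sub_nonneg.mpr hξ))
    (sub_nonneg.mpr (by linarith : ξ - 1 ≤ 1/(1-p))),
    sub_nonneg.mpr hξ, h1p]

lemma Lf_bound (p : ℝ) (hp : 0 < p) (hp1 : p < 1) {δ : ℝ} (hδ : 0 < δ) (hδ1 : δ ≤ 1) :
    Lf p (1/(1-p) + δ) ≤ -((1-p)^2/4) * δ^2 := by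
  have h1p : (0:ℝ) < 1 - p := by linarith
  set α₀ := 1/(1-p) with hα₀def
  have hα₀1 : (1:ℝ) < α₀ := by rw [hα₀def, lt_div_iff₀ h1p]; linarith
  obtain ⟨ξ₁, hξ₁, hs₁⟩ := exists_hasDerivAt_eq_slope (Lf p)
    (fun x => Real.log x - Real.log (x - 1) + Real.log p)
    (by linarith : α₀ < α₀ + δ/2)
    (continuousOn_Lf p (fun x hx => lt_of_lt_of_le hα₀1 hx.1))
    (fun x hx => hasDerivAt_Lf p (lt_trans hα₀1 hx.1))
  obtain ⟨ξ₂, hξ₂, hs₂⟩ := exists_hasDerivAt_eq_slope (Lf p)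
    (fun x => Real.log x - Real.log (x - 1) + Real.log p)
    (by linarith : α₀ + δ/2 < α₀ + δ)
    (continuousOn_Lf p (fun x hx => by have := hx.1; linarith))
    (fun x hx => hasDerivAt_Lf p (by have := hx.1; linarith))
  have hL0 : Lf p α₀ = 0 := Lf_root p hp hp1
  have hd₁ : Real.log ξ₁ - Real.log (ξ₁ - 1) + Real.log p ≤ -(1-p)^2 * (ξ₁ - α₀) :=
    Lf_deriv_bound p hp hp1 hξ₁.1.le (by have := hξ₁.2; linarith)
  have hd₂ : Real.log ξ₂ - Real.log (ξ₂ - 1) + Real.log p ≤ -(1-p)^2 * (ξ₂ - α₀) :=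
    Lf_deriv_bound p hp hp1 (by have := hξ₂.1; linarith) (by have := hξ₂.2; linarith)
  have h₁ : Lf p (α₀ + δ/2) ≤ 0 := by
    have hE : (Lf p (α₀ + δ/2) - Lf p α₀) / (α₀ + δ/2 - α₀) ≤ -(1-p)^2 * (ξ₁ - α₀) := by
      rw [← hs₁]; exact hd₁
    have hpos : (0:ℝ) < α₀ + δ/2 - α₀ := by linarith
    rw [div_le_iff₀ hpos] at hE
    have hnn : -(1-p)^2 * (ξ₁ - α₀) ≤ 0 := by
      have := hξ₁.1
      nlinarith [sq_nonneg (1-p)]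
    nlinarith [hE, hpos]
  have h₂ : Lf p (α₀ + δ) ≤ Lf p (α₀ + δ/2) + (α₀ + δ - (α₀ + δ/2)) * (-(1-p)^2 * (δ/2)) := by
    have hE : (Lf p (α₀ + δ) - Lf p (α₀ + δ/2)) / (α₀ + δ - (α₀ + δ/2))
        ≤ -(1-p)^2 * (ξ₂ - α₀) := by
      rw [← hs₂]; exact hd₂
    have hpos : (0:ℝ) < α₀ + δ - (α₀ + δ/2) := by linarith
    rw [div_le_iff₀ hpos] at hE
    have hξ₂ge : δ/2 ≤ ξ₂ - α₀ := by have := hξ₂.1; linarith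
    have hmono : -(1-p)^2 * (ξ₂ - α₀) ≤ -(1-p)^2 * (δ/2) := by
      nlinarith [sq_nonneg (1-p)]
    nlinarith [hE, hpos, mul_le_mul_of_nonneg_left hmono hpos.le]
  nlinarith [h₁, h₂]

lemma root_in (p : ℝ) (hp : 0 < p) (hp1 : p < 1) (M : ℕ) (hM : 1 ≤ M) {δ : ℝ}
    (hδ : 0 < δ) (hδ1 : δ ≤ 1)
    (hsmall : Real.log 2 / M < (1-p)^2/4 * δ^2) :
    ∃ x, 1/(1-p) < x ∧ x ≤ 1/(1-p) + δ ∧ gM p M x = 0 := by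
  have h1p : (0:ℝ) < 1 - p := by linarith
  set α₀ := 1/(1-p) with hα₀def
  have hα₀1 : (1:ℝ) < α₀ := by rw [hα₀def, lt_div_iff₀ h1p]; linarith
  have hMpos : (0:ℝ) < (M:ℝ) := by exact_mod_cast hM
  have h2M : (2:ℝ) ^ ((1:ℝ)/M) = Real.exp (Real.log 2 / M) := by
    rw [Real.rpow_def_of_pos (by norm_num : (0:ℝ) < 2)]
    ring_nf
  have hga : 0 < gM p M α₀ := by
    rw [gM_eq p hp hp1 M hα₀1, Lf_root p hp hp1, Real.exp_zero, mul_one, sub_pos, h2M]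
    simp only [Real.one_lt_exp_iff]
    positivity
  have hb1 : (1:ℝ) < α₀ + δ := by linarith
  have hgb : gM p M (α₀ + δ) < 0 := by
    rw [gM_eq p hp hp1 M hb1, h2M, ← Real.exp_add, sub_neg]
    have h1 : Lf p (α₀ + δ) ≤ -((1-p)^2/4) * δ^2 := Lf_bound p hp hp1 hδ hδ1
    have h2 : Real.log 2 / M + Lf p (α₀ + δ) < 0 := by nlinarith
    calc Real.exp (Real.log 2 / M + Lf p (α₀ + δ)) < Real.exp 0 := Real.exp_lt_exp.mpr h2
      _ = 1 := Real.exp_zero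
  have hcont : ContinuousOn (gM p M) (Set.Icc α₀ (α₀ + δ)) := by
    have hgt : ∀ x ∈ Set.Icc α₀ (α₀ + δ), (1:ℝ) < x := fun x hx => lt_of_lt_of_le hα₀1 hx.1
    have hc : ContinuousOn (fun α => (2:ℝ)^((1:ℝ)/M) * Real.exp (Lf p α) - 1)
        (Set.Icc α₀ (α₀ + δ)) :=
      (continuousOn_const.mul (Real.continuous_exp.comp_continuousOn
        (continuousOn_Lf p hgt))).sub continuousOn_const
    exact hc.congr (fun x hx => gM_eq p hp hp1 M (hgt x hx))
  have hivt := intermediate_value_Icc' (by linarith : α₀ ≤ α₀ + δ) hcont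
  have h0mem : (0:ℝ) ∈ Set.Icc (gM p M (α₀ + δ)) (gM p M α₀) := ⟨hgb.le, hga.le⟩
  obtain ⟨x, hx, hfx⟩ := hivt h0mem
  refine ⟨x, ?_, hx.2, hfx⟩
  rcases eq_or_lt_of_le hx.1 with h | h
  · exfalso; rw [h] at hga; rw [hfx] at hga; exact lt_irrefl 0 hga
  · exact h

/-- If `A M` denotes the unique root of `g_p(· | M)` in `(1/(1-p), ∞)`, then
`A M → 1/(1-p)`, and for every `0 < s < 1/2` eventually
`1/(1-p) < A M ≤ 1/(1-p) + M^{-s}`. -/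
theorem claim_root_limit (p : ℝ) (hp : 0 < p) (hp1 : p < 1) (A : ℕ → ℝ)
    (hroot : ∀ M : ℕ, 1 ≤ M → 1 / (1 - p) < A M ∧ gM p M (A M) = 0)
    (huniq : ∀ M : ℕ, 1 ≤ M → ∀ β : ℝ, 1 / (1 - p) < β → gM p M β = 0 → β = A M) :
    Filter.Tendsto A Filter.atTop (nhds (1 / (1 - p))) ∧
    ∀ s : ℝ, 0 < s → s < 1 / 2 →
      ∃ M₀ : ℕ, ∀ M : ℕ, M₀ ≤ M →
        1 / (1 - p) < A M ∧ A M ≤ 1 / (1 - p) + (M : ℝ) ^ (-s) := by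
  have h1p : (0:ℝ) < 1 - p := by linarith
  have part2 : ∀ s : ℝ, 0 < s → s < 1 / 2 →
      ∃ M₀ : ℕ, ∀ M : ℕ, M₀ ≤ M →
        1 / (1 - p) < A M ∧ A M ≤ 1 / (1 - p) + (M : ℝ) ^ (-s) := by
    intro s hs hs2
    have hexp : (0:ℝ) < 1 - 2*s := by linarith
    have htend : Filter.Tendsto (fun M : ℕ => (M:ℝ)^(1-2*s)) Filter.atTop Filter.atTop :=
      (tendsto_rpow_atTop hexp).comp tendsto_natCast_atTop_atTop
    have hev : ∀ᶠ M : ℕ in Filter.atTop,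
        4*Real.log 2/(1-p)^2 < (M:ℝ)^(1-2*s) ∧ 1 ≤ M :=
      (htend.eventually_gt_atTop _).and (Filter.eventually_ge_atTop 1)
    obtain ⟨M₀, hM₀⟩ := Filter.eventually_atTop.mp hev
    refine ⟨M₀, fun M hM => ?_⟩
    obtain ⟨hK, hM1⟩ := hM₀ M hM
    have hMpos : (0:ℝ) < (M:ℝ) := by exact_mod_cast hM1
    set δ := (M:ℝ)^(-s) with hδdef
    have hδpos : 0 < δ := Real.rpow_pos_of_pos hMpos _
    have hδ1 : δ ≤ 1 := Real.rpow_le_one_of_one_le_of_nonpos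
      (by exact_mod_cast hM1) (by linarith)
    have hδsq : δ^2 = (M:ℝ)^(-(2*s)) := by
      rw [hδdef, sq, ← Real.rpow_add hMpos]
      ring_nf
    have hid : (M:ℝ)^((1:ℝ)-2*s) = (M:ℝ) * (M:ℝ)^(-(2*s)) := by
      rw [show (1:ℝ)-2*s = 1 + -(2*s) by ring, Real.rpow_add hMpos, Real.rpow_one]
    have hsmall : Real.log 2 / M < (1-p)^2/4 * δ^2 := by
      rw [hδsq, div_lt_iff₀ hMpos]
      have h4 : (0:ℝ) < (1-p)^2/4 := by positivity
      have := mul_lt_mul_of_pos_right hK h4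
      have hL : 4*Real.log 2/(1-p)^2 * ((1-p)^2/4) = Real.log 2 := by
        field_simp
      rw [hL] at this
      calc Real.log 2 < (M:ℝ)^(1-2*s) * ((1-p)^2/4) := this
        _ = (1-p)^2/4 * (M:ℝ)^(-(2*s)) * M := by rw [hid]; ring
    obtain ⟨x, hx1, hx2, hx3⟩ := root_in p hp hp1 M hM1 hδpos hδ1 hsmall
    have hxA : x = A M := huniq M hM1 x hx1 hx3
    rw [← hxA]
    exact ⟨hx1, hx2⟩
  refine ⟨?_, part2⟩
  obtain ⟨M₀, hM₀⟩ := part2 (1/4) (by norm_num) (by norm_num)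
  have hupper : Filter.Tendsto (fun M : ℕ => 1/(1-p) + (M:ℝ)^(-(1/4 : ℝ)))
      Filter.atTop (nhds (1/(1-p))) := by
    have h0 : Filter.Tendsto (fun M : ℕ => (M:ℝ)^(-(1/4 : ℝ))) Filter.atTop (nhds 0) :=
      (tendsto_rpow_neg_atTop (by norm_num : (0:ℝ) < 1/4)).comp tendsto_natCast_atTop_atTop
    have := (tendsto_const_nhds :
      Filter.Tendsto (fun _ : ℕ => 1/(1-p)) Filter.atTop (nhds (1/(1-p)))).add h0
    simpa using this
  refine tendsto_of_tendsto_of_tendsto_of_le_of_le'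
    (tendsto_const_nhds) hupper ?_ ?_
  · exact Filter.eventually_atTop.mpr ⟨M₀, fun M hM => (hM₀ M hM).1.le⟩
  · exact Filter.eventually_atTop.mpr ⟨M₀, fun M hM => (hM₀ M hM).2⟩
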